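/- Let G be a finite simple chordal graph. Then G is vertex decomposable if and only if G is well-covered. -/

import Mathlib

open scoped Classical

variable {V : Type*}

/-- `S` is an independent set of the induced subgraph of `G` on the vertex set `A`. -/
def IsIndepIn (G : SimpleGraph V) (A S : Finset V) : Prop :=
  S ⊆ A ∧ ∀ u ∈ S, ∀ v ∈ S, ¬ G.Adj u v

/-- `S` is a maximal independent set of the induced subgraph of `G` on the vertex set `A`. -/
def IsMaxIndepIn (G : SimpleGraph V) (A S : Finset V) : Prop :=
  IsIndepIn G A S ∧ ∀ T, IsIndepIn G A T → S ⊆ T → T = S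

/-- The induced subgraph of `G` on the vertex set `A` is well-covered: all of its
maximal independent sets have the same cardinality. -/
def WellCoveredOn (G : SimpleGraph V) (A : Finset V) : Prop :=
  ∀ S T, IsMaxIndepIn G A S → IsMaxIndepIn G A T → S.card = T.card

/-- The closed neighbourhood of `x` deleted from `A`: the vertices of `A` distinct from `x`
and not adjacent to `x`. -/
noncomputable def delClosedNbhd (G : SimpleGraph V) (A : Finset V) (x : V) : Finset V :=
  A.filter fun y => y ≠ x ∧ ¬ G.Adj x y

/-- The induced subgraph of `G` on the vertex set `A` is vertex decomposable: it is
well-covered, and either it has no edges, or some vertex `x ∈ A` is such that deleting `x`,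
respectively the closed neighbourhood of `x`, leaves a vertex decomposable graph. -/
def VertexDecomposableOn (G : SimpleGraph V) (A : Finset V) : Prop :=
  WellCoveredOn G A ∧
    ((∀ u ∈ A, ∀ v ∈ A, ¬ G.Adj u v) ∨
      ∃ x, ∃ _h : x ∈ A,
        VertexDecomposableOn G (A.erase x) ∧
        VertexDecomposableOn G (delClosedNbhd G A x))
termination_by A.card
decreasing_by
  · exact Finset.card_erase_lt_of_mem (by assumption)
  · exact Finset.card_lt_card
      (Finset.filter_ssubset.mpr ⟨x, by assumption, by simp⟩)

/-- A finite simple graph is well-covered if all of its maximal independent sets have the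
same cardinality. -/
def WellCovered (G : SimpleGraph V) [Fintype V] : Prop :=
  WellCoveredOn G Finset.univ

/-- A finite simple graph is vertex decomposable. -/
def VertexDecomposable (G : SimpleGraph V) [Fintype V] : Prop :=
  VertexDecomposableOn G Finset.univ

/-- The set of shedding vertices of `G` : those vertices `x` such that both `G \ x` and
`G \ N[x]` are vertex decomposable. -/
def Shed (G : SimpleGraph V) [Fintype V] : Set V :=
  {x | VertexDecomposableOn G (Finset.univ.erase x) ∧
       VertexDecomposableOn G (delClosedNbhd G Finset.univ x)}

/-- `D` is a dominating set of `G`: every vertex not in `D` is adjacent to a vertex of `D`. -/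
def IsDominatingSet (G : SimpleGraph V) (D : Set V) : Prop :=
  ∀ v, v ∉ D → ∃ u ∈ D, G.Adj u v

/-- A vertex is simplicial if its neighbourhood induces a clique. -/
def IsSimplicialVertex (G : SimpleGraph V) (x : V) : Prop :=
  ∀ u v, G.Adj x u → G.Adj x v → u ≠ v → G.Adj u v

/-- A graph is chordal if every induced cycle has length three, i.e. there is no induced
cycle with four or more vertices. -/
def IsChordalGraph {W : Type*} (G : SimpleGraph W) : Prop :=
  ∀ n : ℕ, 4 ≤ n → IsEmpty (SimpleGraph.cycleGraph n ↪g G)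

namespace ChordalAux

def RIn (G : SimpleGraph V) (s : Finset V) (u v : V) : Prop := u ∈ s ∧ v ∈ s ∧ G.Adj u v

def Reach (G : SimpleGraph V) (s : Finset V) (u v : V) : Prop :=
  Relation.ReflTransGen (RIn G s) u v

def SimpIn (G : SimpleGraph V) (A : Finset V) (x : V) : Prop :=
  x ∈ A ∧ ∀ u v, u ∈ A → v ∈ A → G.Adj x u → G.Adj x v → u ≠ v → G.Adj u v

theorem rtg_pathfun {α : Type*} {r : α → α → Prop} {a b : α} (h : Relation.ReflTransGen r a b) :
    ∃ (k : ℕ) (f : ℕ → α), 1 ≤ k ∧ f 0 = a ∧ f (k - 1) = b ∧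
      ∀ i, i + 1 < k → r (f i) (f (i + 1)) := by
  obtain ⟨m, hc, hlast⟩ := List.exists_isChain_cons_of_relationReflTransGen h
  refine ⟨(a :: m).length, fun i => (a :: m).getD i a, by simp, by simp, ?_, ?_⟩
  · show (a :: m).getD ((a :: m).length - 1) a = b
    have hlt : (a :: m).length - 1 < (a :: m).length := by simp
    rw [List.getD_eq_getElem _ _ hlt, ← hlast, List.getLast_eq_getElem]
  · intro i hi
    show r ((a :: m).getD i a) ((a :: m).getD (i+1) a)
    have h1 : i < (a :: m).length := by omega
    rw [List.getD_eq_getElem _ _ h1, List.getD_eq_getElem _ _ hi]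
    exact hc.getElem i hi

variable {G : SimpleGraph V}

theorem Reach.symm {s : Finset V} {u v : V} (h : Reach G s u v) : Reach G s v u :=
  (@Relation.ReflTransGen.stdSymm _ (RIn G s) ⟨fun _ _ h => ⟨h.2.1, h.1, h.2.2.symm⟩⟩).symm _ _ h

theorem reach_restrict {D C : Finset V}
    (hclos : ∀ x ∈ C, ∀ y ∈ D, G.Adj x y → y ∈ C)
    {u v : V} (hu : u ∈ C) (h : Reach G D u v) : v ∈ C ∧ Reach G C u v := by
  induction h with
  | refl => exact ⟨hu, Relation.ReflTransGen.refl⟩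
  | tail hprev hstep ih =>
    obtain ⟨hbD, hcD, hAdj⟩ := hstep
    have hc : _ ∈ C := hclos _ ih.1 _ hcD hAdj
    exact ⟨hc, ih.2.tail ⟨ih.1, hc, hAdj⟩⟩

theorem exists_nbr_in_comp {A S : Finset V} {a b s' : V}
    (haA : a ∈ A) (haS : a ∉ S)
    (hsep : ¬ Reach G (A \ S) a b) (hs'S : s' ∈ S) (hs'A : s' ∈ A)
    (hreach : Reach G (A \ S.erase s') a b) :
    ∃ z, z ∈ A \ S ∧ Reach G (A \ S) a z ∧ G.Adj z s' := by
  have hset : A \ S.erase s' = insert s' (A \ S) := by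
    ext x
    simp only [Finset.mem_sdiff, Finset.mem_erase, Finset.mem_insert]
    by_cases hx : x = s'
    · subst hx; simp [hs'A]
    · simp [hx]
  rw [hset] at hreach
  obtain ⟨k, f, hk1, hf0, hfl, hstep⟩ := rtg_pathfun hreach
  have hmain : ∀ i, i < k → (∀ j, j ≤ i → f j ≠ s') →
      f i ∈ A \ S ∧ Reach G (A \ S) a (f i) := by
    intro i
    induction i with
    | zero =>
      intro _ _
      rw [hf0]
      exact ⟨Finset.mem_sdiff.mpr ⟨haA, haS⟩, Relation.ReflTransGen.refl⟩
    | succ i ih =>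
      intro hik hne
      obtain ⟨h1, h2, h3⟩ := hstep i (by omega)
      have hprev := ih (by omega) (fun j hj => hne j (by omega))
      have hmem : f (i + 1) ∈ A \ S := by
        rcases Finset.mem_insert.mp h2 with hEq | hm
        · exact absurd hEq (hne (i + 1) le_rfl)
        · exact hm
      exact ⟨hmem, hprev.2.tail ⟨hprev.1, hmem, h3⟩⟩
  by_cases hhit : ∃ j, j ≤ k - 1 ∧ f j = s'
  · have hj0 := Nat.find_spec hhit
    set j0 := Nat.find hhit with hj0def
    have hj0pos : 0 < j0 := by
      rcases Nat.eq_zero_or_pos j0 with h0 | h0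
      · exfalso
        have := hj0.2
        rw [h0, hf0] at this
        exact haS (this ▸ hs'S)
      · exact h0
    have hprev := hmain (j0 - 1) (by omega) (fun j hj => by
      intro hEq
      exact Nat.find_min hhit (show j < j0 by omega) ⟨by omega, hEq⟩)
    refine ⟨f (j0 - 1), hprev.1, hprev.2, ?_⟩
    have hst := hstep (j0 - 1) (by omega)
    rw [show j0 - 1 + 1 = j0 by omega, hj0.2] at hst
    exact hst.2.2
  · push_neg at hhit
    exfalso
    have := hmain (k - 1) (by omega) (fun j hj => hhit j hj)
    rw [hfl] at this
    exact hsep this.2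



def PD (G : SimpleGraph V) (C : Finset V) (s t : V) (k : ℕ) (f : ℕ → V) : Prop :=
  2 ≤ k ∧ f 0 = s ∧ f (k - 1) = t ∧ (∀ i, i + 1 < k → G.Adj (f i) (f (i + 1))) ∧
    ∀ i, 0 < i → i < k - 1 → f i ∈ C

variable {G : SimpleGraph V}

theorem exists_min_pd {C : Finset V} {s t : V} (hne : ∃ k f, PD G C s t k f) :
    ∃ k f, PD G C s t k f ∧ ∀ k' f', PD G C s t k' f' → k ≤ k' := by
  obtain ⟨k0, f0, h0⟩ := hne
  have hP : ∃ k, ∃ f, PD G C s t k f := ⟨k0, f0, h0⟩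
  obtain ⟨f, hf⟩ := Nat.find_spec hP
  exact ⟨Nat.find hP, f, hf, fun k' f' h' => Nat.find_le ⟨f', h'⟩⟩

theorem min_pd_props {C : Finset V} {s t : V} {k : ℕ} {f : ℕ → V} (hst : s ≠ t)
    (hpd : PD G C s t k f) (hmin : ∀ k' f', PD G C s t k' f' → k ≤ k') :
    (∀ i j, i < j → j ≤ k - 1 → f i ≠ f j) ∧
    (∀ i j, i < j → j ≤ k - 1 → G.Adj (f i) (f j) → j = i + 1) := by
  obtain ⟨hk2, hf0, hfl, hadj, hmem⟩ := hpd
  constructor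
  · intro i j hij hj hEq
    have hd1 : 1 ≤ j - i := by omega
    set d := j - i with hd
    set k' := k - d with hk'
    set f' : ℕ → V := fun x => if x ≤ i then f x else f (x + d) with hf'
    have hk'2 : 2 ≤ k' := by
      rcases Nat.lt_or_ge k' 2 with hlt | h
      · exfalso
        have hij0 : i = 0 ∧ j = k - 1 := by omega
        apply hst
        rw [← hf0, ← hfl, ← hij0.1, ← hij0.2]
        exact hEq
      · exact h
    have hpd' : PD G C s t k' f' := by
      refine ⟨hk'2, by show f' 0 = s; rw [hf']; simp [hf0], ?_, ?_, ?_⟩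
      · by_cases hc : k' - 1 ≤ i
        · have hi' : k' - 1 = i ∧ j = k - 1 := by omega
          show f' (k' - 1) = t
          rw [hf']; simp only [if_pos hc]
          rw [hi'.1, hEq, hi'.2, hfl]
        · show f' (k' - 1) = t
          rw [hf']; simp only [if_neg hc]
          have he : k' - 1 + d = k - 1 := by omega
          rw [he, hfl]
      · intro x hx
        show G.Adj (f' x) (f' (x + 1))
        by_cases h1 : x + 1 ≤ i
        · rw [hf']; simp only [if_pos h1, if_pos (by omega : x ≤ i)]
          exact hadj x (by omega)
        · by_cases h2 : x ≤ i
          · have hxi : x = i := by omega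
            rw [hf']; simp only [if_pos h2, if_neg h1]
            rw [hxi, hEq]
            have he : i + 1 + d = j + 1 := by omega
            rw [he]; exact hadj j (by omega)
          · rw [hf']; simp only [if_neg h2, if_neg h1]
            have he : x + 1 + d = x + d + 1 := by omega
            rw [he]; exact hadj (x + d) (by omega)
      · intro x hx0 hx1
        show f' x ∈ C
        by_cases h2 : x ≤ i
        · rw [hf']; simp only [if_pos h2]; exact hmem x hx0 (by omega)
        · rw [hf']; simp only [if_neg h2]; exact hmem (x + d) (by omega) (by omega)
    have := hmin k' f' hpd'
    omega
  · intro i j hij hj hA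
    by_contra hne2
    have hd2 : 2 ≤ j - i := by omega
    set d := j - i - 1 with hd
    set k' := k - d with hk'
    set f' : ℕ → V := fun x => if x ≤ i then f x else f (x + d) with hf'
    have hpd' : PD G C s t k' f' := by
      refine ⟨by omega, by show f' 0 = s; rw [hf']; simp [hf0], ?_, ?_, ?_⟩
      · show f' (k' - 1) = t
        rw [hf']; simp only [if_neg (by omega : ¬ k' - 1 ≤ i)]
        have he : k' - 1 + d = k - 1 := by omega
        rw [he, hfl]
      · intro x hx
        show G.Adj (f' x) (f' (x + 1))
        by_cases h1 : x + 1 ≤ i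
        · rw [hf']; simp only [if_pos h1, if_pos (by omega : x ≤ i)]
          exact hadj x (by omega)
        · by_cases h2 : x ≤ i
          · have hxi : x = i := by omega
            rw [hf']; simp only [if_pos h2, if_neg h1]
            rw [hxi]
            have he : i + 1 + d = j := by omega
            rw [he]; exact hA
          · rw [hf']; simp only [if_neg h2, if_neg h1]
            have he : x + 1 + d = x + d + 1 := by omega
            rw [he]; exact hadj (x + d) (by omega)
      · intro x hx0 hx1
        show f' x ∈ C
        by_cases h2 : x ≤ i
        · rw [hf']; simp only [if_pos h2]; exact hmem x hx0 (by omega)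
        · rw [hf']; simp only [if_neg h2]; exact hmem (x + d) (by omega) (by omega)
    have := hmin k' f' hpd'
    omega

theorem fin_sub_val_eq_one {n : ℕ} (hn : 2 ≤ n) (a b : Fin n) :
    (b - a).val = 1 ↔ (b.val = a.val + 1 ∨ (a.val = n - 1 ∧ b.val = 0)) := by
  have ha := a.isLt; have hb := b.isLt
  rw [Fin.sub_def]
  show (n - a.val + b.val) % n = 1 ↔ _
  rcases le_or_gt a.val b.val with h | h
  · have h1 : n - a.val + b.val = (b.val - a.val) + n := by omega
    rw [h1, Nat.add_mod_right, Nat.mod_eq_of_lt (by omega)]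
    omega
  · rw [Nat.mod_eq_of_lt (by omega)]
    omega

theorem cycle_adj_iff {n : ℕ} (hn : 4 ≤ n) (a b : Fin n) :
    (SimpleGraph.cycleGraph n).Adj a b ↔
      (b.val = a.val + 1 ∨ a.val = b.val + 1 ∨ (a.val = n - 1 ∧ b.val = 0) ∨
        (b.val = n - 1 ∧ a.val = 0)) := by
  rw [SimpleGraph.cycleGraph_adj', fin_sub_val_eq_one (by omega) b a,
    fin_sub_val_eq_one (by omega) a b]
  tauto

variable {G : SimpleGraph V}

theorem no_double_path (hch : IsChordalGraph G) {Ca Cb : Finset V} {s t : V}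
    (hst : s ≠ t) (hadj : ¬ G.Adj s t)
    (hsb : s ∉ Cb) (hta : t ∉ Ca) (htb : t ∉ Cb)
    (hdisj : ∀ x ∈ Ca, x ∉ Cb)
    (hnoe : ∀ x ∈ Ca, ∀ y ∈ Cb, ¬ G.Adj x y)
    {k1 : ℕ} {f1 : ℕ → V} (h1 : PD G Ca s t k1 f1)
    (h1d : ∀ i j, i < j → j ≤ k1 - 1 → f1 i ≠ f1 j)
    (h1c : ∀ i j, i < j → j ≤ k1 - 1 → G.Adj (f1 i) (f1 j) → j = i + 1)
    {k2 : ℕ} {f2 : ℕ → V} (h2 : PD G Cb s t k2 f2)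
    (h2d : ∀ i j, i < j → j ≤ k2 - 1 → f2 i ≠ f2 j)
    (h2c : ∀ i j, i < j → j ≤ k2 - 1 → G.Adj (f2 i) (f2 j) → j = i + 1) : False := by
  obtain ⟨hk1, hf10, hf1l, hadj1, hmem1⟩ := h1
  obtain ⟨hk2, hf20, hf2l, hadj2, hmem2⟩ := h2
  have hsCb : s ∉ Cb := hsb
  have hn1 : 2 ≤ k1 - 1 := by
    rcases Nat.lt_or_ge (k1 - 1) 2 with h | h
    · exfalso
      have hk : k1 = 2 := by omega
      apply hadj
      have ha := hadj1 0 (by omega)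
      rwa [hf10, show (0 + 1 = k1 - 1) by omega, hf1l] at ha
    · exact h
  have hn2 : 2 ≤ k2 - 1 := by
    rcases Nat.lt_or_ge (k2 - 1) 2 with h | h
    · exfalso
      have hk : k2 = 2 := by omega
      apply hadj
      have ha := hadj2 0 (by omega)
      rwa [hf20, show (0 + 1 = k2 - 1) by omega, hf2l] at ha
    · exact h
  set n := (k1 - 1) + (k2 - 1) with hn
  have hn4 : 4 ≤ n := by omega
  set F : Fin n → V := fun i => if (i : ℕ) ≤ k1 - 1 then f1 i else f2 (n - i) with hF
  have hF1 : ∀ i : Fin n, (i : ℕ) ≤ k1 - 1 → F i = f1 i := by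
    intro i h; rw [hF]; simp only [if_pos h]
  have hF2 : ∀ i : Fin n, k1 - 1 < (i : ℕ) → F i = f2 (n - (i : ℕ)) := by
    intro i h; rw [hF]; simp only [if_neg (by omega : ¬ (i : ℕ) ≤ k1 - 1)]
  have hFmemB : ∀ i : Fin n, k1 - 1 < (i : ℕ) → F i ∈ Cb := by
    intro i h
    have hi := i.isLt
    rw [hF2 i h]
    exact hmem2 (n - (i : ℕ)) (by omega) (by omega)
  -- injectivity on ordered pairs
  have hne : ∀ a b : Fin n, (a : ℕ) < (b : ℕ) → F a ≠ F b := by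
    intro a b hab
    have hb' := b.isLt
    by_cases hb : (b : ℕ) ≤ k1 - 1
    · rw [hF1 a (by omega), hF1 b hb]
      exact h1d a b hab hb
    · have hFb := hFmemB b (by omega)
      by_cases ha : (a : ℕ) ≤ k1 - 1
      · rw [hF1 a ha]
        intro hEq
        rcases Nat.eq_zero_or_pos (a : ℕ) with h0 | h0
        · rw [h0, hf10] at hEq
          exact hsCb (hEq ▸ hFb)
        · rcases eq_or_lt_of_le ha with hEq2 | hlt
          · rw [hEq2, hf1l] at hEq
            rw [← hEq] at hFb
            exact htb hFb
          · have : f1 (a : ℕ) ∈ Ca := hmem1 a h0 hlt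
            rw [hEq] at this
            exact hdisj _ this hFb
      · rw [hF2 a (by omega), hF2 b (by omega)]
        intro hEq
        exact h2d (n - (b : ℕ)) (n - (a : ℕ)) (by omega) (by omega) hEq.symm
  have hkey : ∀ a b : Fin n, (a : ℕ) < (b : ℕ) →
      (G.Adj (F a) (F b) ↔ ((b : ℕ) = (a : ℕ) + 1 ∨ ((a : ℕ) = 0 ∧ (b : ℕ) = n - 1))) := by
    intro a b hab
    have ha' := a.isLt
    have hb' := b.isLt
    by_cases hb : (b : ℕ) ≤ k1 - 1
    · rw [hF1 a (by omega), hF1 b hb]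
      constructor
      · intro h
        exact Or.inl (h1c a b hab hb h)
      · rintro (h | ⟨h0, hl⟩)
        · rw [h]
          exact hadj1 a (by omega)
        · exfalso; omega
    · by_cases ha : (a : ℕ) ≤ k1 - 1
      · rw [hF2 b (by omega)]
        rcases Nat.eq_zero_or_pos (a : ℕ) with h0 | h0
        · rw [hF1 a ha, h0, hf10, ← hf20]
          constructor
          · intro h
            have hq := h2c 0 (n - (b : ℕ)) (by omega) (by omega) h
            right
            exact ⟨rfl, by omega⟩
          · rintro (h | ⟨_, hl⟩)
            · exfalso; omega
            · have hq1 : n - (b : ℕ) = 1 := by omega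
              rw [hq1]
              exact hadj2 0 (by omega)
        · rcases eq_or_lt_of_le ha with hEq | hlt
          · rw [hF1 a ha, hEq, hf1l, ← hf2l]
            constructor
            · intro h
              have := h2c (n - (b : ℕ)) (k2 - 1) (by omega) (by omega) h.symm
              left; omega
            · rintro (h | ⟨h0, _⟩)
              · have hq : n - (b : ℕ) = k2 - 2 := by omega
                rw [hq]
                have h2 := hadj2 (k2 - 2) (by omega)
                rw [show k2 - 2 + 1 = k2 - 1 by omega] at h2
                exact h2.symm
              · exfalso; omega
          · have hFa : f1 (a : ℕ) ∈ Ca := hmem1 a h0 hlt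
            have hFb : f2 (n - (b : ℕ)) ∈ Cb := hmem2 _ (by omega) (by omega)
            rw [hF1 a ha]
            constructor
            · intro h
              exact absurd h (hnoe _ hFa _ hFb)
            · rintro (h | ⟨h0', _⟩) <;> (exfalso; omega)
      · rw [hF2 a (by omega), hF2 b (by omega)]
        constructor
        · intro h
          have := h2c (n - (b : ℕ)) (n - (a : ℕ)) (by omega) (by omega) h.symm
          left; omega
        · rintro (h | ⟨h0, _⟩)
          · have he : n - (a : ℕ) = (n - (b : ℕ)) + 1 := by omega
            rw [he]
            exact (hadj2 (n - (b : ℕ)) (by omega)).symm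
          · exfalso; omega
  have hemb : SimpleGraph.cycleGraph n ↪g G := by
    refine ⟨⟨F, ?_⟩, ?_⟩
    · intro a b hEq
      by_contra hne'
      rcases lt_trichotomy (a : ℕ) (b : ℕ) with h | h | h
      · exact hne a b h hEq
      · exact hne' (Fin.ext h)
      · exact hne b a h hEq.symm
    · intro a b
      show G.Adj (F a) (F b) ↔ _
      rw [cycle_adj_iff hn4]
      have ha' := a.isLt
      have hb' := b.isLt
      rcases lt_trichotomy (a : ℕ) (b : ℕ) with h | h | h
      · rw [hkey a b h]
        constructor
        · rintro (h1 | ⟨h1, h2⟩)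
          · exact Or.inl h1
          · exact Or.inr (Or.inr (Or.inr ⟨h2, h1⟩))
        · rintro (h1 | h1 | ⟨h1, h2⟩ | ⟨h1, h2⟩)
          · exact Or.inl h1
          · exfalso; omega
          · exfalso; omega
          · exact Or.inr ⟨h2, h1⟩
      · have hab : a = b := Fin.ext h
        subst hab
        constructor
        · intro hc
          exact absurd hc (G.irrefl)
        · intro hc
          exfalso; omega
      · rw [G.adj_comm, hkey b a h]
        constructor
        · rintro (h1 | ⟨h1, h2⟩)
          · exact Or.inr (Or.inl h1)
          · exact Or.inr (Or.inr (Or.inl ⟨h2, h1⟩))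
        · rintro (h1 | h1 | ⟨h1, h2⟩ | ⟨h1, h2⟩)
          · exfalso; omega
          · exact Or.inl h1
          · exact Or.inr ⟨h2, h1⟩
          · exfalso; omega
  exact (hch n hn4).false hemb

theorem comp_simp {A S C : Finset V} {w : V}
    (IH : ∀ B, B ⊂ A → (∀ u ∈ B, ∀ v ∈ B, u ≠ v → G.Adj u v) ∨
        ∃ x y, SimpIn G B x ∧ SimpIn G B y ∧ x ≠ y ∧ ¬ G.Adj x y)
    (hclq : ∀ u ∈ S, ∀ v ∈ S, u ≠ v → G.Adj u v)
    (hw : w ∈ C)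
    (hclos : ∀ x ∈ C, ∀ y ∈ A, G.Adj x y → y ∈ C ∪ S)
    (hCA : C ⊆ A)
    (hprop : C ∪ S ⊂ A) :
    ∃ x ∈ C, SimpIn G A x := by
  rcases IH (C ∪ S) hprop with hcl | ⟨x, y, hx, hy, hxy, hnadj⟩
  · refine ⟨w, hw, hCA hw, ?_⟩
    intro u v hu hv hau hav huv
    exact hcl u (hclos w hw u hu hau) v (hclos w hw v hv hav) huv
  · have hone : x ∈ C ∨ y ∈ C := by
      by_contra hcon
      push_neg at hcon
      have hxS : x ∈ S := (Finset.mem_union.mp hx.1).resolve_left hcon.1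
      have hyS : y ∈ S := (Finset.mem_union.mp hy.1).resolve_left hcon.2
      exact hnadj (hclq x hxS y hyS hxy)
    rcases hone with hxC | hyC
    · refine ⟨x, hxC, hCA hxC, ?_⟩
      intro u v hu hv hau hav huv
      exact hx.2 u v (hclos x hxC u hu hau) (hclos x hxC v hv hav) hau hav huv
    · refine ⟨y, hyC, hCA hyC, ?_⟩
      intro u v hu hv hau hav huv
      exact hy.2 u v (hclos y hyC u hu hau) (hclos y hyC v hv hav) hau hav huv

theorem dirac (hch : IsChordalGraph G) (A : Finset V) :
    (∀ u ∈ A, ∀ v ∈ A, u ≠ v → G.Adj u v) ∨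
      ∃ x y, SimpIn G A x ∧ SimpIn G A y ∧ x ≠ y ∧ ¬ G.Adj x y := by
  induction A using Finset.strongInduction with
  | _ A IH =>
  by_cases hclq : ∀ u ∈ A, ∀ v ∈ A, u ≠ v → G.Adj u v
  · exact Or.inl hclq
  push_neg at hclq
  obtain ⟨a, haA, b, hbA, hab, hnadj⟩ := hclq
  right
  set Seps := A.powerset.filter (fun S => a ∉ S ∧ b ∉ S ∧ ¬ Reach G (A \ S) a b) with hSeps
  have hSeps_ne : ((A.erase a).erase b) ∈ Seps := by
    rw [hSeps, Finset.mem_filter, Finset.mem_powerset]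
    refine ⟨(Finset.erase_subset _ _).trans (Finset.erase_subset _ _), by simp, by simp, ?_⟩
    intro hreach
    rcases Relation.ReflTransGen.cases_head hreach with hEq | ⟨c, ⟨h1, h2, h3⟩, _⟩
    · exact hab hEq
    · have hc : c = a ∨ c = b := by
        have := h2
        simp only [Finset.mem_sdiff, Finset.mem_erase, not_and, not_not] at this
        by_cases hca : c = a
        · exact Or.inl hca
        · by_cases hcb : c = b
          · exact Or.inr hcb
          · exact absurd (this.2 hcb hca) (by simp [this.1])
      rcases hc with rfl | rfl
      · exact G.irrefl h3
      · exact hnadj h3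
  obtain ⟨S, hS_mem, hS_min⟩ := Finset.exists_min_image Seps Finset.card ⟨_, hSeps_ne⟩
  rw [hSeps, Finset.mem_filter, Finset.mem_powerset] at hS_mem
  obtain ⟨hSA, haS, hbS, hsep⟩ := hS_mem
  set D := A \ S with hD
  set Ca := D.filter (fun x => Reach G D a x) with hCa
  set Cb := D.filter (fun x => Reach G D b x) with hCb
  have haD : a ∈ D := by rw [hD]; exact Finset.mem_sdiff.mpr ⟨haA, haS⟩
  have hbD : b ∈ D := by rw [hD]; exact Finset.mem_sdiff.mpr ⟨hbA, hbS⟩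
  have haCa : a ∈ Ca := by rw [hCa]; exact Finset.mem_filter.mpr ⟨haD, Relation.ReflTransGen.refl⟩
  have hbCb : b ∈ Cb := by rw [hCb]; exact Finset.mem_filter.mpr ⟨hbD, Relation.ReflTransGen.refl⟩
  have hclosa : ∀ x ∈ Ca, ∀ y ∈ D, G.Adj x y → y ∈ Ca := by
    intro x hx y hy hxy
    rw [hCa, Finset.mem_filter] at hx ⊢
    exact ⟨hy, hx.2.tail ⟨hx.1, hy, hxy⟩⟩
  have hclosb : ∀ x ∈ Cb, ∀ y ∈ D, G.Adj x y → y ∈ Cb := by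
    intro x hx y hy hxy
    rw [hCb, Finset.mem_filter] at hx ⊢
    exact ⟨hy, hx.2.tail ⟨hx.1, hy, hxy⟩⟩
  have hdisj : ∀ x, x ∈ Ca → x ∈ Cb → False := by
    intro x hx1 hx2
    rw [hCa, Finset.mem_filter] at hx1
    rw [hCb, Finset.mem_filter] at hx2
    exact hsep (hx1.2.trans hx2.2.symm)
  have hCaD : Ca ⊆ D := by rw [hCa]; exact Finset.filter_subset _ _
  have hCbD : Cb ⊆ D := by rw [hCb]; exact Finset.filter_subset _ _
  have hDA : D ⊆ A := by rw [hD]; exact Finset.sdiff_subset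
  -- every separator vertex has neighbours in both components
  have hnbr : ∀ s' ∈ S, (∃ z ∈ Ca, G.Adj z s') ∧ (∃ z ∈ Cb, G.Adj z s') := by
    intro s' hs'
    have herase : Reach G (A \ S.erase s') a b := by
      by_contra hsep'
      have hmem : S.erase s' ∈ Seps := by
        rw [hSeps, Finset.mem_filter, Finset.mem_powerset]
        exact ⟨(Finset.erase_subset _ _).trans hSA,
          fun h => haS (Finset.mem_of_mem_erase h),
          fun h => hbS (Finset.mem_of_mem_erase h), hsep'⟩
      have h1 := hS_min _ hmem
      have h2 := Finset.card_erase_lt_of_mem hs'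
      omega
    constructor
    · obtain ⟨z, hz1, hz2, hz3⟩ := exists_nbr_in_comp haA haS hsep hs' (hSA hs') herase
      exact ⟨z, by rw [hCa]; exact Finset.mem_filter.mpr ⟨by rw [hD]; exact hz1, by rw [hD]; exact hz2⟩, hz3⟩
    · have hsep_b : ¬ Reach G (A \ S) b a := fun h => hsep h.symm
      obtain ⟨z, hz1, hz2, hz3⟩ := exists_nbr_in_comp hbA hbS hsep_b hs' (hSA hs') herase.symm
      exact ⟨z, by rw [hCb]; exact Finset.mem_filter.mpr ⟨by rw [hD]; exact hz1, by rw [hD]; exact hz2⟩, hz3⟩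
  -- S is a clique
  have hSclq : ∀ u ∈ S, ∀ v ∈ S, u ≠ v → G.Adj u v := by
    intro s1 hs1 s2 hs2 hs12
    by_contra hno
    obtain ⟨⟨z1, hz1Ca, hz1adj⟩, ⟨w1, hw1Cb, hw1adj⟩⟩ := hnbr s1 hs1
    obtain ⟨⟨z2, hz2Ca, hz2adj⟩, ⟨w2, hw2Cb, hw2adj⟩⟩ := hnbr s2 hs2
    have hSnotD : ∀ x ∈ S, x ∉ D := by
      intro x hx hxD
      rw [hD, Finset.mem_sdiff] at hxD
      exact hxD.2 hx
    have hs1Ca : s1 ∉ Ca := fun h => hSnotD s1 hs1 (hCaD h)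
    have hs1Cb : s1 ∉ Cb := fun h => hSnotD s1 hs1 (hCbD h)
    have hs2Ca : s2 ∉ Ca := fun h => hSnotD s2 hs2 (hCaD h)
    have hs2Cb : s2 ∉ Cb := fun h => hSnotD s2 hs2 (hCbD h)
    -- build a path through Ca
    have hbuild : ∀ (C : Finset V), C ⊆ D → (∀ x ∈ C, ∀ y ∈ D, G.Adj x y → y ∈ C) →
        s1 ∉ C → s2 ∉ C →
        ∀ z1 ∈ C, ∀ z2 ∈ C, G.Adj z1 s1 → G.Adj z2 s2 → Reach G D z1 z2 →
        ∃ k f, PD G C s1 s2 k f := by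
      intro C hCD hclosC hs1C hs2C z1 hz1C z2 hz2C hadj1 hadj2 hreach12
      set r : V → V → Prop := fun u v => G.Adj u v ∧ (u = s1 ∨ u ∈ C) ∧ (v = s2 ∨ v ∈ C) with hr
      have hmid : Relation.ReflTransGen r z1 z2 := by
        have hres := (reach_restrict hclosC hz1C hreach12).2
        refine Relation.ReflTransGen.mono ?_ _ _ hres
        intro x y hxy
        exact ⟨hxy.2.2, Or.inr hxy.1, Or.inr hxy.2.1⟩
      have hall : Relation.ReflTransGen r s1 s2 :=
        ((Relation.ReflTransGen.single
          (show r s1 z1 from ⟨hadj1.symm, Or.inl rfl, Or.inr hz1C⟩)).trans hmid).tail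
          ⟨hadj2, Or.inr hz2C, Or.inl rfl⟩
      obtain ⟨k, f, hk, hf0, hfl, hstep⟩ := rtg_pathfun hall
      have hk2 : 2 ≤ k := by
        rcases Nat.lt_or_ge k 2 with h | h
        · exfalso
          have hk1 : k = 1 := by omega
          apply hs12
          rw [← hf0, ← hfl, hk1]
        · exact h
      refine ⟨k, f, hk2, hf0, hfl, fun i hi => (hstep i hi).1, ?_⟩
      intro i h0 hik
      have hA := (hstep (i - 1) (by omega)).2.2
      rw [show i - 1 + 1 = i by omega] at hA
      have hB := (hstep i (by omega)).2.1
      rcases hA with hA | hA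
      · rcases hB with hB | hB
        · exfalso; rw [hB] at hA; exact hs12 hA
        · exact hB
      · rcases hB with hB | hB
        · exact absurd hA (by rw [hB]; exact hs1C)
        · exact hB
    have hz1Ca' := hz1Ca; have hz2Ca' := hz2Ca
    rw [hCa, Finset.mem_filter] at hz1Ca' hz2Ca'
    have hpdA : ∃ k f, PD G Ca s1 s2 k f :=
      hbuild Ca hCaD hclosa hs1Ca hs2Ca z1 hz1Ca z2 hz2Ca hz1adj hz2adj
        (hz1Ca'.2.symm.trans hz2Ca'.2)
    have hw1Cb' := hw1Cb; have hw2Cb' := hw2Cb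
    rw [hCb, Finset.mem_filter] at hw1Cb' hw2Cb'
    have hpdB : ∃ k f, PD G Cb s1 s2 k f :=
      hbuild Cb hCbD hclosb hs1Cb hs2Cb w1 hw1Cb w2 hw2Cb hw1adj hw2adj
        (hw1Cb'.2.symm.trans hw2Cb'.2)
    obtain ⟨ka, fa, hpa, hmina⟩ := exists_min_pd hpdA
    obtain ⟨kb, fb, hpb, hminb⟩ := exists_min_pd hpdB
    have hPa := min_pd_props hs12 hpa hmina
    have hPb := min_pd_props hs12 hpb hminb
    exact no_double_path hch hs12 hno hs1Cb hs2Ca hs2Cb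
      (fun x hx hx2 => hdisj x hx hx2)
      (fun x hx y hy hadjxy => hdisj y (hclosa x hx y (hCbD hy) hadjxy) hy)
      hpa hPa.1 hPa.2 hpb hPb.1 hPb.2
  -- apply IH to both sides
  have hclosa' : ∀ x ∈ Ca, ∀ y ∈ A, G.Adj x y → y ∈ Ca ∪ S := by
    intro x hx y hy hxy
    by_cases hyS : y ∈ S
    · exact Finset.mem_union_right _ hyS
    · exact Finset.mem_union_left _
        (hclosa x hx y (by rw [hD]; exact Finset.mem_sdiff.mpr ⟨hy, hyS⟩) hxy)
  have hclosb' : ∀ x ∈ Cb, ∀ y ∈ A, G.Adj x y → y ∈ Cb ∪ S := by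
    intro x hx y hy hxy
    by_cases hyS : y ∈ S
    · exact Finset.mem_union_right _ hyS
    · exact Finset.mem_union_left _
        (hclosb x hx y (by rw [hD]; exact Finset.mem_sdiff.mpr ⟨hy, hyS⟩) hxy)
  have hpropa : Ca ∪ S ⊂ A := by
    rw [Finset.ssubset_iff_of_subset (Finset.union_subset (hCaD.trans hDA) hSA)]
    exact ⟨b, hbA, fun hb => (Finset.mem_union.mp hb).elim
      (fun h => hdisj b h hbCb) (fun h => hbS h)⟩
  have hpropb : Cb ∪ S ⊂ A := by
    rw [Finset.ssubset_iff_of_subset (Finset.union_subset (hCbD.trans hDA) hSA)]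
    exact ⟨a, haA, fun ha => (Finset.mem_union.mp ha).elim
      (fun h => hdisj a haCa h) (fun h => haS h)⟩
  obtain ⟨xa, hxaCa, hxa⟩ := comp_simp IH hSclq haCa hclosa' (hCaD.trans hDA) hpropa
  obtain ⟨xb, hxbCb, hxb⟩ := comp_simp IH hSclq hbCb hclosb' (hCbD.trans hDA) hpropb
  refine ⟨xa, xb, hxa, hxb, ?_, ?_⟩
  · intro hEq
    exact hdisj xa hxaCa (hEq ▸ hxbCb)
  · intro hadj'
    exact hdisj xb (hclosa xa hxaCa xb (hCbD hxbCb) hadj') hxbCb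

theorem exists_simp_nbr (hch : IsChordalGraph G) {A : Finset V} {u v : V}
    (hu : u ∈ A) (hv : v ∈ A) (huv : G.Adj u v) :
    ∃ x y, SimpIn G A x ∧ y ∈ A ∧ G.Adj x y := by
  set C := A.filter (fun x => Reach G A u x) with hC
  have hCA : C ⊆ A := by rw [hC]; exact Finset.filter_subset _ _
  have huC : u ∈ C := by
    rw [hC]; exact Finset.mem_filter.mpr ⟨hu, Relation.ReflTransGen.refl⟩
  have hvC : v ∈ C := by
    rw [hC]
    exact Finset.mem_filter.mpr ⟨hv, Relation.ReflTransGen.single ⟨hu, hv, huv⟩⟩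
  have hclos : ∀ x ∈ C, ∀ y ∈ A, G.Adj x y → y ∈ C := by
    intro x hx y hy hxy
    rw [hC, Finset.mem_filter] at hx ⊢
    exact ⟨hy, hx.2.tail ⟨hCA (by rw [hC]; exact Finset.mem_filter.mpr hx), hy, hxy⟩⟩
  have hsimpin : ∀ x, SimpIn G C x → SimpIn G A x := by
    intro x hx
    exact ⟨hCA hx.1, fun p q hp hq hap haq hpq =>
      hx.2 p q (hclos x hx.1 p hp hap) (hclos x hx.1 q hq haq) hap haq hpq⟩
  have hnbr : ∀ x ∈ C, ∃ y ∈ A, G.Adj x y := by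
    intro x hx
    have hr : Reach G A u x := by
      rw [hC, Finset.mem_filter] at hx; exact hx.2
    rcases Relation.ReflTransGen.cases_tail hr with hEq | ⟨z, _, hz⟩
    · exact ⟨v, hv, hEq ▸ huv⟩
    · exact ⟨z, hz.1, hz.2.2.symm⟩
  rcases dirac hch C with hclq | ⟨x, y, hx, _, _, _⟩
  · refine ⟨u, v, ⟨hu, ?_⟩, hv, huv⟩
    intro p q hp hq hap haq hpq
    exact hclq p (hclos u huC p hp hap) q (hclos u huC q hq haq) hpq
  · obtain ⟨y', hy'A, hy'adj⟩ := hnbr x hx.1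
    exact ⟨x, y', hsimpin x hx, hy'A, hy'adj⟩

theorem maxind_insert {A : Finset V} {y : V} (hy : y ∈ A) {S : Finset V}
    (h : IsMaxIndepIn G (delClosedNbhd G A y) S) : IsMaxIndepIn G A (insert y S) := by
  obtain ⟨⟨hsub, hind⟩, hmax⟩ := h
  have hSB : ∀ z ∈ S, z ∈ A ∧ z ≠ y ∧ ¬ G.Adj y z := by
    intro z hz
    have := hsub hz
    rw [delClosedNbhd, Finset.mem_filter] at this
    exact ⟨this.1, this.2⟩
  constructor
  · constructor
    · intro z hz
      rcases Finset.mem_insert.mp hz with rfl | hz'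
      · exact hy
      · exact (hSB z hz').1
    · intro p hp q hq
      rcases Finset.mem_insert.mp hp with rfl | hp' <;>
        rcases Finset.mem_insert.mp hq with rfl | hq'
      · exact G.irrefl
      · exact (hSB q hq').2.2
      · exact fun h => (hSB p hp').2.2 h.symm
      · exact hind p hp' q hq'
  · intro T hT hsubT
    have hyT : y ∈ T := hsubT (Finset.mem_insert_self y S)
    have hTe : IsIndepIn G (delClosedNbhd G A y) (T.erase y) := by
      constructor
      · intro z hz
        obtain ⟨hzy, hzT⟩ := Finset.mem_erase.mp hz
        rw [delClosedNbhd, Finset.mem_filter]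
        exact ⟨hT.1 hzT, hzy, hT.2 y hyT z hzT⟩
      · intro p hp q hq
        exact hT.2 p (Finset.mem_erase.mp hp).2 q (Finset.mem_erase.mp hq).2
    have hST : S ⊆ T.erase y := fun z hz =>
      Finset.mem_erase.mpr ⟨(hSB z hz).2.1, hsubT (Finset.mem_insert_of_mem hz)⟩
    have hTS := hmax _ hTe hST
    calc T = insert y (T.erase y) := (Finset.insert_erase hyT).symm
    _ = insert y S := by rw [hTS]

theorem wc_del {A : Finset V} {y : V} (hy : y ∈ A) (hwc : WellCoveredOn G A) :
    WellCoveredOn G (delClosedNbhd G A y) := by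
  intro S T hS hT
  have h := hwc _ _ (maxind_insert hy hS) (maxind_insert hy hT)
  have hyS : y ∉ S := fun hyS => by
    have := hS.1.1 hyS
    rw [delClosedNbhd, Finset.mem_filter] at this
    exact this.2.1 rfl
  have hyT : y ∉ T := fun hyT => by
    have := hT.1.1 hyT
    rw [delClosedNbhd, Finset.mem_filter] at this
    exact this.2.1 rfl
  rw [Finset.card_insert_of_notMem hyS, Finset.card_insert_of_notMem hyT] at h
  omega

theorem wc_erase {A : Finset V} {x y : V} (hy : y ∈ A) (hxy : G.Adj x y)
    (hsimp : SimpIn G A x) (hwc : WellCoveredOn G A) : WellCoveredOn G (A.erase y) := by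
  have key : ∀ S, IsMaxIndepIn G (A.erase y) S → IsMaxIndepIn G A S := by
    intro S hS
    obtain ⟨⟨hsub, hind⟩, hmax⟩ := hS
    have hxA := hsimp.1
    have hxney : x ≠ y := G.ne_of_adj hxy
    have hz : ∃ z ∈ S, G.Adj z y := by
      by_contra hcon
      push_neg at hcon
      have hzx : ∃ z ∈ S, z = x ∨ G.Adj x z := by
        by_contra hcon2
        push_neg at hcon2
        have hxs : x ∉ S := fun h => (hcon2 x h).1 rfl
        have hins : IsIndepIn G (A.erase y) (insert x S) := by
          constructor
          · intro z hz
            rcases Finset.mem_insert.mp hz with rfl | h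
            · exact Finset.mem_erase.mpr ⟨hxney, hxA⟩
            · exact hsub h
          · intro p hp q hq
            rcases Finset.mem_insert.mp hp with rfl | hp' <;>
              rcases Finset.mem_insert.mp hq with rfl | hq'
            · exact G.irrefl
            · exact (hcon2 q hq').2
            · exact fun h => (hcon2 p hp').2 h.symm
            · exact hind p hp' q hq'
        have := hmax _ hins (Finset.subset_insert x S)
        exact hxs (this ▸ Finset.mem_insert_self x S)
      obtain ⟨z, hzS, hz'⟩ := hzx
      have hadjzy : G.Adj z y := by
        rcases hz' with rfl | hadj
        · exact hxy
        · exact hsimp.2 z y (Finset.mem_of_mem_erase (hsub hzS)) hy hadj hxy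
            (Finset.mem_erase.mp (hsub hzS)).1
      exact hcon z hzS hadjzy
    obtain ⟨z, hzS, hzy⟩ := hz
    constructor
    · exact ⟨fun w hw => Finset.mem_of_mem_erase (hsub hw), hind⟩
    · intro T hT hsubT
      have hyT : y ∉ T := fun hyT => hT.2 z (hsubT hzS) y hyT hzy
      exact hmax T ⟨fun w hw => Finset.mem_erase.mpr
        ⟨fun hEq => hyT (hEq ▸ hw), hT.1 hw⟩, hT.2⟩ hsubT
  intro S T hS hT
  exact hwc S T (key S hS) (key T hT)

theorem wc_vd (hch : IsChordalGraph G) :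
    ∀ A : Finset V, WellCoveredOn G A → VertexDecomposableOn G A := by
  intro A
  induction A using Finset.strongInduction with
  | _ A IH =>
  intro hwc
  rw [VertexDecomposableOn]
  refine ⟨hwc, ?_⟩
  by_cases hE : ∀ u ∈ A, ∀ v ∈ A, ¬ G.Adj u v
  · exact Or.inl hE
  · right
    push_neg at hE
    obtain ⟨u, hu, v, hv, huv⟩ := hE
    obtain ⟨x, y, hx, hyA, hxy⟩ := exists_simp_nbr hch hu hv huv
    refine ⟨y, hyA, IH _ (Finset.erase_ssubset hyA) (wc_erase hyA hxy hx hwc),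
      IH _ ?_ (wc_del hyA hwc)⟩
    rw [delClosedNbhd]
    exact Finset.filter_ssubset.mpr ⟨y, hyA, by simp⟩


end ChordalAux

/-- A chordal graph is vertex decomposable if and only if it is well-covered. -/
theorem statement4 {V : Type*} [Fintype V] (G : SimpleGraph V)
    (hch : IsChordalGraph G) :
    VertexDecomposable G ↔ WellCovered G := by
  constructor
  · intro h
    rw [VertexDecomposable, VertexDecomposableOn] at h
    exact h.1
  · intro h
    exact ChordalAux.wc_vd hch Finset.univ h
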